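/- arXiv:2206.09054 — 4 statements merged into one kernel-verified Lean document; each statement's English description precedes it below -/
import Mathlib

section
/- (Adjoint equation.) Let λ(τ,t) = (h(τ) ∘ φ(τ−t))' ∘ φ(t). Then λ(τ,·) satisfies ∂_t λ(τ,t) = − λ(τ,t) · (F' ∘ φ(t)) for 0 < t < τ ≤ 1, where the product is composition of the linear map λ(τ,t)(ξ) : S → ℝ with the linear map F'(φ(t)(ξ)) : S → S, evaluated at each point ξ ∈ S. -/
set_option maxHeartbeats 1000000


/-- The lifted right hand side `F(s,p,θ) = (1, f(s,p,θ), 0)`. -/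
def liftedF {d k : ℕ} (f : (ℝ × (Fin d → ℝ) × (Fin k → ℝ)) → (Fin d → ℝ))
    (ξ : ℝ × (Fin d → ℝ) × (Fin k → ℝ)) : ℝ × (Fin d → ℝ) × (Fin k → ℝ) :=
  ((1 : ℝ), f ξ, (0 : Fin k → ℝ))

/-- Adjoint equation: with `λ(τ,t) = (h(τ) ∘ φ(τ−t))' ∘ φ(t)`,
the function `λ(τ,·)` satisfies `∂ₜ λ(τ,t) = −λ(τ,t) · (F' ∘ φ(t))` for `0 < t < τ ≤ 1`,
where the product is the composition of the linear map `λ(τ,t)(ξ) : S → ℝ` with the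
linear map `F'(φ(t)(ξ)) : S → S`, at each point `ξ ∈ S`. -/
theorem adjoint_equation
    (d k : ℕ)
    (f : (ℝ × (Fin d → ℝ) × (Fin k → ℝ)) → (Fin d → ℝ))
    (φ : ℝ → (ℝ × (Fin d → ℝ) × (Fin k → ℝ)) → (ℝ × (Fin d → ℝ) × (Fin k → ℝ)))
    (h : ℝ → (ℝ × (Fin d → ℝ) × (Fin k → ℝ)) → ℝ)
    -- f is C¹
    (hf : ContDiff ℝ 1 f)
    -- φ is the lifted flow: group property, identity at 0, and φ'(τ) = F ∘ φ(τ)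
    (hφ0 : φ 0 = id)
    (hgroup : ∀ t τ : ℝ, φ (t + τ) = φ t ∘ φ τ)
    (hflow : ∀ (τ : ℝ) ξ, HasDerivAt (fun u => φ u ξ) (liftedF f (φ τ ξ)) τ)
    -- joint smoothness of the flow, and smoothness of the error functions
    (hφsmooth : ContDiff ℝ 2 (fun p : ℝ × (ℝ × (Fin d → ℝ) × (Fin k → ℝ)) => φ p.1 p.2))
    (hh : ∀ τ, ContDiff ℝ 2 (h τ)) :
    ∀ (τ t : ℝ), 0 < t → t < τ → τ ≤ 1 →
      ∀ ξ, HasDerivAt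
        (fun u => fderiv ℝ (fun ζ => h τ (φ (τ - u) ζ)) (φ u ξ))
        (-((fderiv ℝ (fun ζ => h τ (φ (τ - t) ζ)) (φ t ξ)).comp
            (fderiv ℝ (liftedF f) (φ t ξ))))
        t := by
  intro τ t _ _ _ ξ
  set Ψ : ℝ × (ℝ × (Fin d → ℝ) × (Fin k → ℝ)) → (ℝ × (Fin d → ℝ) × (Fin k → ℝ)) :=
    fun p => φ p.1 p.2 with hΨ
  set F : (ℝ × (Fin d → ℝ) × (Fin k → ℝ)) → (ℝ × (Fin d → ℝ) × (Fin k → ℝ)) :=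
    liftedF f with hFdef
  have hΨdiff : Differentiable ℝ Ψ := hφsmooth.differentiable two_ne_zero
  have hFc1 : ContDiff ℝ 1 F := by
    have : ContDiff ℝ 1 (fun ξ : ℝ × (Fin d → ℝ) × (Fin k → ℝ) =>
        ((1 : ℝ), f ξ, (0 : Fin k → ℝ))) := contDiff_const.prodMk (hf.prodMk contDiff_const)
    exact this
  have hφv : ∀ v : ℝ, ContDiff ℝ 2 (φ v) := by
    intro v
    have : ContDiff ℝ 2 (Ψ ∘ (fun y : ℝ × (Fin d → ℝ) × (Fin k → ℝ) => (v, y))) :=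
      hφsmooth.comp (contDiff_const.prodMk contDiff_id)
    exact this
  set R : ((ℝ × (ℝ × (Fin d → ℝ) × (Fin k → ℝ))) →L[ℝ] (ℝ × (Fin d → ℝ) × (Fin k → ℝ)))
      →L[ℝ] ((ℝ × (Fin d → ℝ) × (Fin k → ℝ)) →L[ℝ] (ℝ × (Fin d → ℝ) × (Fin k → ℝ))) :=
    (ContinuousLinearMap.compL ℝ _ _ _).flip
      (ContinuousLinearMap.inr ℝ ℝ (ℝ × (Fin d → ℝ) × (Fin k → ℝ))) with hR
  have hRapp : ∀ (T : (ℝ × (ℝ × (Fin d → ℝ) × (Fin k → ℝ))) →L[ℝ]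
      (ℝ × (Fin d → ℝ) × (Fin k → ℝ))) w, (R T) w = T (0, w) := fun T w => rfl
  have hpartial : ∀ (v : ℝ) (x : ℝ × (Fin d → ℝ) × (Fin k → ℝ)),
      HasFDerivAt (φ v) (R (fderiv ℝ Ψ (v, x))) x := by
    intro v x
    have h1 : HasFDerivAt (fun y : ℝ × (Fin d → ℝ) × (Fin k → ℝ) => (v, y))
        (ContinuousLinearMap.inr ℝ ℝ _) x := hasFDerivAt_prodMk_right v x
    have h2 : HasFDerivAt Ψ (fderiv ℝ Ψ (v, x)) (v, x) := (hΨdiff (v, x)).hasFDerivAt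
    exact h2.comp x h1
  set x₀ : ℝ × (Fin d → ℝ) × (Fin k → ℝ) := φ t ξ with hx₀
  set B : (ℝ × (Fin d → ℝ) × (Fin k → ℝ)) →L[ℝ] (ℝ × (Fin d → ℝ) × (Fin k → ℝ)) :=
    fderiv ℝ F x₀ with hB
  set Fx₀ : ℝ × (Fin d → ℝ) × (Fin k → ℝ) := F x₀ with hFx₀
  set p₀ : ℝ × (ℝ × (Fin d → ℝ) × (Fin k → ℝ)) := (0, x₀) with hp₀
  set D2 := fderiv ℝ (fderiv ℝ Ψ) p₀ with hD2
  have hfderivC1 : ContDiff ℝ 1 (fderiv ℝ Ψ) := hφsmooth.fderiv_right (le_refl 2)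
  have hD2at : HasFDerivAt (fderiv ℝ Ψ) D2 p₀ :=
    (hfderivC1.differentiable one_ne_zero p₀).hasFDerivAt
  have hsymm : ∀ v w, D2 v w = D2 w v := fun v w =>
    second_derivative_symmetric (fun y => (hΨdiff y).hasFDerivAt) hD2at v w
  -- values of fderiv Ψ at (0, x)
  have hval1 : ∀ x, fderiv ℝ Ψ (0, x) (1, 0) = F x := by
    intro x
    have hc : HasDerivAt (fun v : ℝ => (v, x)) ((1 : ℝ), (0 : ℝ × (Fin d → ℝ) × (Fin k → ℝ))) 0 :=
      (hasDerivAt_id 0).prodMk (hasDerivAt_const 0 x)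
    have h1 : HasDerivAt (fun v : ℝ => φ v x) (fderiv ℝ Ψ (0, x) (1, 0)) 0 :=
      by have := (hΨdiff (0, x)).hasFDerivAt.comp_hasDerivAt 0 hc; exact this
    have h2 : HasDerivAt (fun v : ℝ => φ v x) (F x) 0 := by
      have h3 := hflow 0 x
      rw [hφ0] at h3
      exact h3
    exact h1.unique h2
  have hval2 : ∀ x v, fderiv ℝ Ψ (0, x) ((0 : ℝ), v) = v := by
    intro x v
    have hl : HasDerivAt (fun s : ℝ => x + s • v) v 0 := by
      simpa using ((hasDerivAt_id (0:ℝ)).smul_const v).const_add x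
    have hc : HasDerivAt (fun s : ℝ => ((0 : ℝ), x + s • v)) ((0 : ℝ), v) 0 :=
      (hasDerivAt_const 0 (0:ℝ)).prodMk hl
    have hΨat : HasFDerivAt Ψ (fderiv ℝ Ψ (0, x)) ((0 : ℝ), x + (0:ℝ) • v) := by
      simpa using (hΨdiff ((0 : ℝ), x)).hasFDerivAt
    have h1 : HasDerivAt (fun s : ℝ => Ψ (0, x + s • v)) (fderiv ℝ Ψ (0, x) ((0:ℝ), v)) 0 :=
      by have := hΨat.comp_hasDerivAt 0 hc; exact this
    have h2 : HasDerivAt (fun s : ℝ => Ψ (0, x + s • v)) v 0 := by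
      have heq : (fun s : ℝ => Ψ (0, x + s • v)) = fun s : ℝ => x + s • v := by
        funext s
        show φ 0 (x + s • v) = x + s • v
        rw [hφ0]; rfl
      rw [heq]; exact hl
    exact h1.unique h2
  -- compute D2 (0, w)
  have hD2w : ∀ w, D2 ((0 : ℝ), w) ((1 : ℝ), 0) = B w
      ∧ D2 ((0 : ℝ), w) ((0 : ℝ), Fx₀) = 0 := by
    intro w
    have hl : HasDerivAt (fun s : ℝ => x₀ + s • w) w 0 := by
      simpa using ((hasDerivAt_id (0:ℝ)).smul_const w).const_add x₀
    have hc : HasDerivAt (fun s : ℝ => ((0 : ℝ), x₀ + s • w)) ((0 : ℝ), w) 0 :=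
      (hasDerivAt_const 0 (0:ℝ)).prodMk hl
    have hD2at' : HasFDerivAt (fderiv ℝ Ψ) D2 ((0 : ℝ), x₀ + (0:ℝ) • w) := by
      simpa [hp₀] using hD2at
    have hcurve : HasDerivAt (fun s : ℝ => fderiv ℝ Ψ (0, x₀ + s • w)) (D2 ((0:ℝ), w)) 0 :=
      hD2at'.comp_hasDerivAt 0 hc
    constructor
    · have h1 : HasDerivAt (fun s : ℝ => fderiv ℝ Ψ (0, x₀ + s • w) ((1:ℝ), 0))
          (D2 ((0:ℝ), w) ((1:ℝ), 0)) 0 := by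
        have := hcurve.clm_apply (hasDerivAt_const (0:ℝ)
          ((1:ℝ), (0 : ℝ × (Fin d → ℝ) × (Fin k → ℝ))))
        simpa using this
      have h2 : HasDerivAt (fun s : ℝ => fderiv ℝ Ψ (0, x₀ + s • w) ((1:ℝ), 0)) (B w) 0 := by
        have heq : (fun s : ℝ => fderiv ℝ Ψ (0, x₀ + s • w) ((1:ℝ), 0))
            = fun s : ℝ => F (x₀ + s • w) := by
          funext s; exact hval1 _
        rw [heq]
        have hFat : HasFDerivAt F B (x₀ + (0:ℝ) • w) := by
          simpa using (hFc1.differentiable one_ne_zero x₀).hasFDerivAt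
        exact hFat.comp_hasDerivAt 0 hl
      exact h1.unique h2
    · have h1 : HasDerivAt (fun s : ℝ => fderiv ℝ Ψ (0, x₀ + s • w) ((0:ℝ), Fx₀))
          (D2 ((0:ℝ), w) ((0:ℝ), Fx₀)) 0 := by
        have := hcurve.clm_apply (hasDerivAt_const (0:ℝ) ((0:ℝ), Fx₀))
        simpa using this
      have h2 : HasDerivAt (fun s : ℝ => fderiv ℝ Ψ (0, x₀ + s • w) ((0:ℝ), Fx₀))
          (0 : ℝ × (Fin d → ℝ) × (Fin k → ℝ)) 0 := by
        have heq : (fun s : ℝ => fderiv ℝ Ψ (0, x₀ + s • w) ((0:ℝ), Fx₀))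
            = fun _ : ℝ => Fx₀ := by
          funext s; exact hval2 _ _
        rw [heq]; exact hasDerivAt_const 0 Fx₀
      exact h1.unique h2
  -- derivative of u ↦ fderiv (φ (t-u)) (φ u ξ)
  have hDkey : HasDerivAt (fun u : ℝ => R (fderiv ℝ Ψ (t - u, φ u ξ))) (-B) t := by
    have hγ : HasDerivAt (fun u : ℝ => ((t - u : ℝ), φ u ξ)) ((-1 : ℝ), Fx₀) t := by
      have h1 : HasDerivAt (fun u : ℝ => t - u) (-1 : ℝ) t := by
        simpa using ((hasDerivAt_id t).const_sub t)
      exact h1.prodMk (hflow t ξ)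
    have hD2at' : HasFDerivAt (fderiv ℝ Ψ) D2 ((t - t : ℝ), φ t ξ) := by
      have : ((t - t : ℝ), φ t ξ) = p₀ := by rw [hp₀, hx₀]; norm_num
      rw [this]; exact hD2at
    have hcomp : HasDerivAt (fun u : ℝ => fderiv ℝ Ψ (t - u, φ u ξ))
        (D2 ((-1 : ℝ), Fx₀)) t := hD2at'.comp_hasDerivAt t hγ
    have hfinal := (R.hasFDerivAt).comp_hasDerivAt t hcomp
    have hRD : R (D2 ((-1 : ℝ), Fx₀)) = -B := by
      refine ContinuousLinearMap.ext fun w => ?_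
      have hneg : ((-1 : ℝ), Fx₀) = (-((1:ℝ), (0 : ℝ × (Fin d → ℝ) × (Fin k → ℝ))))
          + ((0:ℝ), Fx₀) := by
        simp [Prod.ext_iff]
      calc (R (D2 ((-1 : ℝ), Fx₀))) w = D2 ((-1 : ℝ), Fx₀) (0, w) := hRapp _ _
        _ = D2 ((0:ℝ), w) ((-1 : ℝ), Fx₀) := hsymm _ _
        _ = -(D2 ((0:ℝ), w) ((1:ℝ), 0)) + D2 ((0:ℝ), w) ((0:ℝ), Fx₀) := by
            rw [hneg, map_add, map_neg]
        _ = -(B w) := by rw [(hD2w w).1, (hD2w w).2, add_zero]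
        _ = (-B) w := rfl
    rw [hRD] at hfinal
    exact hfinal
  -- identify λ(u) with A ∘ D(u)
  set g : (ℝ × (Fin d → ℝ) × (Fin k → ℝ)) → ℝ := fun ζ => h τ (φ (τ - t) ζ) with hg
  have hgdiff : Differentiable ℝ g := by
    have h1 : ContDiff ℝ 2 ((h τ) ∘ (φ (τ - t))) := (hh τ).comp (hφv (τ - t))
    exact fun x => (h1.differentiable two_ne_zero x)
  set A : (ℝ × (Fin d → ℝ) × (Fin k → ℝ)) →L[ℝ] ℝ := fderiv ℝ g x₀ with hA
  have hlam : ∀ u : ℝ, fderiv ℝ (fun ζ => h τ (φ (τ - u) ζ)) (φ u ξ)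
      = A.comp (R (fderiv ℝ Ψ (t - u, φ u ξ))) := by
    intro u
    have hpt : φ (t - u) (φ u ξ) = x₀ := by
      have h1 := congrFun (hgroup (t - u) u) ξ
      rw [hx₀]
      have h2 : t - u + u = t := by ring
      rw [h2] at h1
      exact h1.symm
    have hsplit : (fun ζ => h τ (φ (τ - u) ζ)) = g ∘ (φ (t - u)) := by
      funext ζ
      have h1 := congrFun (hgroup (τ - t) (t - u)) ζ
      have h2 : τ - t + (t - u) = τ - u := by ring
      rw [h2] at h1
      show h τ (φ (τ - u) ζ) = h τ (φ (τ - t) (φ (t - u) ζ))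
      rw [h1]; rfl
    rw [hsplit]
    have hcomp := (hgdiff (φ (t - u) (φ u ξ))).hasFDerivAt.comp (φ u ξ) (hpartial (t - u) (φ u ξ))
    rw [hpt] at hcomp
    rw [hcomp.fderiv]
  -- assemble
  have hAcomp : HasDerivAt (fun u : ℝ => A.comp (R (fderiv ℝ Ψ (t - u, φ u ξ))))
      (A.comp (-B)) t := by
    have h1 := ((ContinuousLinearMap.compL ℝ
      (ℝ × (Fin d → ℝ) × (Fin k → ℝ)) (ℝ × (Fin d → ℝ) × (Fin k → ℝ)) ℝ
      A).hasFDerivAt).comp_hasDerivAt t hDkey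
    simpa [Function.comp_def] using h1
  have hfuneq : (fun u => fderiv ℝ (fun ζ => h τ (φ (τ - u) ζ)) (φ u ξ))
      = fun u : ℝ => A.comp (R (fderiv ℝ Ψ (t - u, φ u ξ))) := funext hlam
  rw [hfuneq]
  have hend : A.comp (-B) = -(A.comp B) := by
    refine ContinuousLinearMap.ext fun w => ?_
    simp
  rw [hend] at hAcomp
  exact hAcomp
end

section
/- (Gradient via the adjoint equation, single time point.) Let the loss be L(t₀,x₀,θ) = h(τ)(t₀+τ, ϕ(t₀+τ,t₀,x₀,θ), θ) for a fixed τ ∈ (0,1]. If λ(τ,·) solves the adjoint equation ∂_t λ(τ,t) = −λ(τ,t)·(F'∘φ(t)) backward in time from the terminal condition λ(τ,τ) = h(τ)'∘φ(τ), then L' = λ(τ,0). -/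
/-- General abstract version of the adjoint-equation gradient theorem. -/
theorem gradient_single_time_point_aux
    {E : Type*} [NormedAddCommGroup E] [NormedSpace ℝ E]
    (τ : ℝ) (hτ : 0 < τ)
    (F : E → E) (φ : ℝ → E → E) (h : E → ℝ)
    (hF : ContDiff ℝ 1 F) (hh : ContDiff ℝ 1 h)
    (hφ0 : φ 0 = id)
    (hflow : ∀ (t : ℝ) ξ, HasDerivAt (fun u => φ u ξ) (F (φ t ξ)) t)
    (hφsmooth : ContDiff ℝ 2 (fun p : ℝ × E => φ p.1 p.2))
    (lam : ℝ → E → (E →L[ℝ] ℝ))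
    (hadj : ∀ t ∈ Set.Ioo (0:ℝ) τ, ∀ ξ,
      HasDerivAt (fun u => lam u ξ) (-((lam t ξ).comp (fderiv ℝ F (φ t ξ)))) t)
    (hcont : ∀ ξ, ContinuousOn (fun t => lam t ξ) (Set.Icc 0 τ))
    (hterm : ∀ ξ, lam τ ξ = fderiv ℝ h (φ τ ξ)) :
    ∀ ξ, fderiv ℝ (fun ζ => h (φ τ ζ)) ξ = lam 0 ξ := by
  intro ξ
  have hΦ2 : ContDiff ℝ 2 (fun p : ℝ × E => φ p.1 p.2) := hφsmooth
  have hΦd : Differentiable ℝ (fun p : ℝ × E => φ p.1 p.2) :=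
    hΦ2.differentiable (by norm_num)
  have hΦ'c : ContDiff ℝ 1 (fderiv ℝ (fun p : ℝ × E => φ p.1 p.2)) :=
    hΦ2.fderiv_right (le_refl 2)
  have hΦ'd : Differentiable ℝ (fderiv ℝ (fun p : ℝ × E => φ p.1 p.2)) :=
    hΦ'c.differentiable (by norm_num)
  have hFd : Differentiable ℝ F := hF.differentiable (by norm_num)
  -- the spatial derivative of `φ t`
  have hDφ : ∀ (t : ℝ) (ζ : E),
      HasFDerivAt (φ t)
        ((fderiv ℝ (fun p : ℝ × E => φ p.1 p.2) (t, ζ)).comp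
          (ContinuousLinearMap.inr ℝ ℝ E)) ζ := by
    intro t ζ
    exact ((hΦd (t, ζ)).hasFDerivAt).comp ζ (hasFDerivAt_prodMk_right t ζ)
  -- the time derivative of the flow
  have htime : ∀ (t : ℝ) (ζ : E),
      fderiv ℝ (fun p : ℝ × E => φ p.1 p.2) (t, ζ) (1, (0:E)) = F (φ t ζ) := by
    intro t ζ
    have hi : HasDerivAt (fun u : ℝ => (u, ζ)) ((1:ℝ), (0:E)) t :=
      (hasDerivAt_id t).prodMk (hasDerivAt_const t ζ)
    have h1 : HasDerivAt (fun u => φ u ζ)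
        (fderiv ℝ (fun p : ℝ × E => φ p.1 p.2) (t, ζ) (1, (0:E))) t :=
      by have := ((hΦd (t, ζ)).hasFDerivAt).comp_hasDerivAt t hi; exact this
    exact h1.unique (hflow t ζ)
  -- mixed second derivative identity
  have hmix : ∀ (t : ℝ) (ζ : E) (v : E),
      (fderiv ℝ (fderiv ℝ (fun p : ℝ × E => φ p.1 p.2)) (t, ζ)) ((0:ℝ), v) (1, (0:E))
        = fderiv ℝ F (φ t ζ)
            ((fderiv ℝ (fun p : ℝ × E => φ p.1 p.2) (t, ζ)) ((0:ℝ), v)) := by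
    intro t ζ v
    have hg1 : HasFDerivAt
        (fun p : ℝ × E => fderiv ℝ (fun p : ℝ × E => φ p.1 p.2) p ((1:ℝ), (0:E)))
        ((ContinuousLinearMap.apply ℝ E ((1:ℝ), (0:E))).comp
          (fderiv ℝ (fderiv ℝ (fun p : ℝ × E => φ p.1 p.2)) (t, ζ))) (t, ζ) :=
      ((ContinuousLinearMap.apply ℝ E ((1:ℝ), (0:E))).hasFDerivAt).comp (t, ζ)
        (hΦ'd (t, ζ)).hasFDerivAt
    have hg2 : HasFDerivAt (fun p : ℝ × E => F (φ p.1 p.2))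
        ((fderiv ℝ F (φ t ζ)).comp
          (fderiv ℝ (fun p : ℝ × E => φ p.1 p.2) (t, ζ))) (t, ζ) :=
      ((hFd (φ t ζ)).hasFDerivAt).comp (t, ζ) (hΦd (t, ζ)).hasFDerivAt
    have heq : (fun p : ℝ × E => fderiv ℝ (fun p : ℝ × E => φ p.1 p.2) p ((1:ℝ), (0:E)))
        = fun p : ℝ × E => F (φ p.1 p.2) := by
      funext p
      exact htime p.1 p.2
    rw [heq] at hg1
    have h3 := hg1.unique hg2
    have happ := ContinuousLinearMap.ext_iff.mp h3 ((0:ℝ), v)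
    simpa using happ
  -- symmetry of the second derivative
  have hsymm : ∀ (t : ℝ) (ζ : E) (v : E),
      (fderiv ℝ (fderiv ℝ (fun p : ℝ × E => φ p.1 p.2)) (t, ζ)) (1, (0:E)) ((0:ℝ), v)
        = (fderiv ℝ (fderiv ℝ (fun p : ℝ × E => φ p.1 p.2)) (t, ζ)) ((0:ℝ), v) (1, (0:E)) := by
    intro t ζ v
    exact second_derivative_symmetric (fun y => (hΦd y).hasFDerivAt)
      (hΦ'd (t, ζ)).hasFDerivAt _ _
  -- variational equation
  have hvar : ∀ t : ℝ,
      HasDerivAt (fun u => (fderiv ℝ (fun p : ℝ × E => φ p.1 p.2) (u, ξ)).comp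
          (ContinuousLinearMap.inr ℝ ℝ E))
        ((fderiv ℝ F (φ t ξ)).comp
          ((fderiv ℝ (fun p : ℝ × E => φ p.1 p.2) (t, ξ)).comp
            (ContinuousLinearMap.inr ℝ ℝ E))) t := by
    intro t
    have hi : HasDerivAt (fun u : ℝ => (u, ξ)) ((1:ℝ), (0:E)) t :=
      (hasDerivAt_id t).prodMk (hasDerivAt_const t ξ)
    have hB : HasDerivAt (fun u => fderiv ℝ (fun p : ℝ × E => φ p.1 p.2) (u, ξ))
        ((fderiv ℝ (fderiv ℝ (fun p : ℝ × E => φ p.1 p.2)) (t, ξ)) (1, (0:E))) t :=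
      ((hΦ'd (t, ξ)).hasFDerivAt).comp_hasDerivAt t hi
    have hBc := hB.clm_comp
      (hasDerivAt_const (x := t) (c := ContinuousLinearMap.inr ℝ ℝ E))
    rw [ContinuousLinearMap.comp_zero, add_zero] at hBc
    convert hBc using 1
    refine ContinuousLinearMap.ext fun v => ?_
    simp only [ContinuousLinearMap.coe_comp', Function.comp_apply,
      ContinuousLinearMap.inr_apply]
    rw [hsymm t ξ v, hmix t ξ v]
  -- the function `A t = lam t ξ ∘ D(φ t) ξ`
  set A : ℝ → (E →L[ℝ] ℝ) := fun t => (lam t ξ).comp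
    ((fderiv ℝ (fun p : ℝ × E => φ p.1 p.2) (t, ξ)).comp
      (ContinuousLinearMap.inr ℝ ℝ E)) with hA
  have hAderiv : ∀ t ∈ Set.Ioo (0:ℝ) τ, HasDerivAt A 0 t := by
    intro t ht
    have h4 := (hadj t ht ξ).clm_comp (hvar t)
    convert h4 using 1
    rw [ContinuousLinearMap.neg_comp, ← ContinuousLinearMap.comp_assoc]
    exact (neg_add_cancel _).symm
  have hAcont : ContinuousOn A (Set.Icc 0 τ) := by
    have h1 : Continuous fun t : ℝ =>
        (fderiv ℝ (fun p : ℝ × E => φ p.1 p.2) (t, ξ)).comp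
          (ContinuousLinearMap.inr ℝ ℝ E) := by
      have h2 : Continuous fun t : ℝ => fderiv ℝ (fun p : ℝ × E => φ p.1 p.2) (t, ξ) :=
        (hΦ'c.continuous).comp (continuous_id.prodMk continuous_const)
      exact h2.clm_comp continuous_const
    exact (hcont ξ).clm_comp h1.continuousOn
  have hconst : ∀ s ∈ Set.Ioo (0:ℝ) τ, A τ = A s := by
    intro s hs
    have h5 := constant_of_has_deriv_right_zero
      (f := A) (a := s) (b := τ) (hAcont.mono (Set.Icc_subset_Icc hs.1.le le_rfl))
      (fun x hx => ((hAderiv x ⟨lt_of_lt_of_le hs.1 hx.1, hx.2⟩).hasDerivWithinAt))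
    exact h5 τ ⟨hs.2.le, le_rfl⟩
  have hA0 : A 0 = A τ := by
    have hne : (nhdsWithin (0:ℝ) (Set.Ioo 0 τ)).NeBot := by
      rw [← mem_closure_iff_nhdsWithin_neBot, closure_Ioo (ne_of_lt hτ)]
      exact ⟨le_rfl, hτ.le⟩
    have h1 : Filter.Tendsto A (nhdsWithin (0:ℝ) (Set.Ioo 0 τ)) (nhds (A 0)) :=
      ((hAcont 0 ⟨le_rfl, hτ.le⟩).mono Set.Ioo_subset_Icc_self).tendsto
    have h2 : Filter.Tendsto A (nhdsWithin (0:ℝ) (Set.Ioo 0 τ)) (nhds (A τ)) := by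
      refine Filter.Tendsto.congr' ?_ tendsto_const_nhds
      filter_upwards [self_mem_nhdsWithin] with s hs
      exact hconst s hs
    exact tendsto_nhds_unique h1 h2
  have hend : A τ = fderiv ℝ (fun ζ => h (φ τ ζ)) ξ := by
    have hhd : HasFDerivAt h (fderiv ℝ h (φ τ ξ)) (φ τ ξ) :=
      (hh.differentiable (by norm_num) (φ τ ξ)).hasFDerivAt
    have h6 := (hhd.comp ξ (hDφ τ ξ)).fderiv
    show (lam τ ξ).comp ((fderiv ℝ (fun p : ℝ × E => φ p.1 p.2) (τ, ξ)).comp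
      (ContinuousLinearMap.inr ℝ ℝ E)) = _
    rw [hterm ξ]
    exact h6.symm
  have hstart : A 0 = lam 0 ξ := by
    have h7 : (fderiv ℝ (fun p : ℝ × E => φ p.1 p.2) ((0:ℝ), ξ)).comp
        (ContinuousLinearMap.inr ℝ ℝ E) = ContinuousLinearMap.id ℝ E := by
      have h1 := hDφ 0 ξ
      rw [hφ0] at h1
      exact h1.unique (hasFDerivAt_id ξ)
    show (lam 0 ξ).comp ((fderiv ℝ (fun p : ℝ × E => φ p.1 p.2) ((0:ℝ), ξ)).comp
      (ContinuousLinearMap.inr ℝ ℝ E)) = _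
    rw [h7, ContinuousLinearMap.comp_id]
  rw [← hend, ← hA0]
  exact hstart

/-- Gradient via the adjoint equation, single time point:
if `λ(τ,·)` solves the adjoint equation backward in time from the terminal condition
`λ(τ,τ) = h(τ)' ∘ φ(τ)`, then the derivative of the loss `L = h(τ) ∘ φ(τ)`
satisfies `L' = λ(τ,0)`. -/
theorem gradient_single_time_point
    (d k : ℕ) (τ : ℝ) (hτ : τ ∈ Set.Ioc (0:ℝ) 1)
    (f : (ℝ × (Fin d → ℝ) × (Fin k → ℝ)) → (Fin d → ℝ))
    (φ : ℝ → (ℝ × (Fin d → ℝ) × (Fin k → ℝ)) → (ℝ × (Fin d → ℝ) × (Fin k → ℝ)))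
    (h : ℝ → (ℝ × (Fin d → ℝ) × (Fin k → ℝ)) → ℝ)
    -- regularity assumptions
    (hf : ContDiff ℝ 1 f)
    (hh : ∀ t, ContDiff ℝ 1 (h t))
    -- φ is the lifted flow
    (hφ0 : φ 0 = id)
    (hgroup : ∀ t s : ℝ, φ (t + s) = φ t ∘ φ s)
    (hflow : ∀ (t : ℝ) ξ, HasDerivAt (fun u => φ u ξ) (liftedF f (φ t ξ)) t)
    (hφsmooth : ContDiff ℝ 2 (fun p : ℝ × (ℝ × (Fin d → ℝ) × (Fin k → ℝ)) => φ p.1 p.2))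
    -- λ(τ,·), written `lam`, solves the adjoint equation backward on (0,τ) ...
    (lam : ℝ → (ℝ × (Fin d → ℝ) × (Fin k → ℝ)) →
      ((ℝ × (Fin d → ℝ) × (Fin k → ℝ)) →L[ℝ] ℝ))
    (hadj : ∀ t ∈ Set.Ioo (0:ℝ) τ, ∀ ξ,
      HasDerivAt (fun u => lam u ξ)
        (-((lam t ξ).comp (fderiv ℝ (liftedF f) (φ t ξ)))) t)
    (hcont : ∀ ξ, ContinuousOn (fun t => lam t ξ) (Set.Icc 0 τ))
    -- ... starting from the terminal condition λ(τ,τ) = h(τ)' ∘ φ(τ)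
    (hterm : ∀ ξ, lam τ ξ = fderiv ℝ (h τ) (φ τ ξ)) :
    -- then L' = λ(τ,0) for the loss L = h(τ) ∘ φ(τ)
    ∀ ξ, fderiv ℝ (fun ζ => h τ (φ τ ζ)) ξ = lam 0 ξ := by
  have hF : ContDiff ℝ 1 (liftedF f) := by
    unfold liftedF
    exact contDiff_const.prodMk (hf.prodMk contDiff_const)
  exact gradient_single_time_point_aux τ hτ.1 (liftedF f) φ (h τ) hF (hh τ)
    hφ0 hflow hφsmooth lam hadj hcont hterm
end

section
/- (Gradient via the adjoint equation for continuous observations.) Suppose σ is the Lebesgue measure on [0,1] (ρ_c ≡ 1, ρ_d ≡ 0), so that L(t₀,x₀,θ) = ∫₀¹ h(τ)(t₀+τ, x(t₀+τ), θ) dτ where x = ϕ(·, t₀, x₀, θ). Let g(t) = h(t)'(t₀+t, x(t₀+t), θ) and J(t) = f'(t₀+t, x(t₀+t), θ). If a : [0,1] → ℝ^{1+d+k} solves ȧ(t) = −g(t) − a₂(t)·J(t) backward from a(1) = 0, then L'(t₀,x₀,θ) = a(0). -/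
set_option synthInstance.maxHeartbeats 1000000
set_option maxHeartbeats 1000000
set_option linter.unusedVariables false


open Set intervalIntegral

section AdjointAux

open MeasureTheory



variable {E X : Type*} [NormedAddCommGroup E] [NormedSpace ℝ E]
  [NormedAddCommGroup X] [NormedSpace ℝ X]

lemma hasFDerivAt_partial {G : ℝ × E → X} (hG : ContDiff ℝ 1 G) (t : ℝ) (x : E) :
    HasFDerivAt (fun y => G (t, y)) ((fderiv ℝ G (t, x)).comp (ContinuousLinearMap.inr ℝ ℝ E))
      x :=
  ((hG.differentiable one_ne_zero (t, x)).hasFDerivAt).comp x (hasFDerivAt_prodMk_right t x)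

lemma continuous_partial_fderiv {G : ℝ × E → X} (hG : ContDiff ℝ 1 G) :
    Continuous (fun p : ℝ × E => (fderiv ℝ G p).comp (ContinuousLinearMap.inr ℝ ℝ E)) :=
  (hG.continuous_fderiv one_ne_zero).clm_comp continuous_const

lemma param_hasFDerivAt [ProperSpace E] {G : ℝ × E → X} (hG : ContDiff ℝ 1 G)
    (a b : ℝ) (x₀ : E) :
    HasFDerivAt (fun x => ∫ t in a..b, G (t, x))
      (∫ t in a..b, (fderiv ℝ G (t, x₀)).comp (ContinuousLinearMap.inr ℝ ℝ E)) x₀ := by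
  set F' : E → ℝ → E →L[ℝ] X := fun x t => (fderiv ℝ G (t, x)).comp
    (ContinuousLinearMap.inr ℝ ℝ E) with hF'
  have hcontF' : Continuous fun p : ℝ × E => F' p.2 p.1 := by
    simpa using continuous_partial_fderiv hG
  have hK : IsCompact ((uIcc a b) ×ˢ Metric.closedBall x₀ 1) :=
    isCompact_uIcc.prod (isCompact_closedBall x₀ 1)
  obtain ⟨C, hC⟩ := hK.exists_bound_of_continuousOn hcontF'.continuousOn
  apply hasFDerivAt_integral_of_dominated_of_fderiv_le'' (μ := MeasureTheory.volume)
    (F := fun x t => G (t, x)) (F' := F') (s := Metric.ball x₀ 1) (bound := fun _ => C) (Metric.ball_mem_nhds x₀ one_pos)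
  · filter_upwards with x
    exact (hG.continuous.comp (continuous_id.prodMk continuous_const)).aestronglyMeasurable
  · exact (hG.continuous.comp (continuous_id.prodMk continuous_const)).intervalIntegrable a b
  · exact (hcontF'.comp (continuous_id.prodMk continuous_const)).aestronglyMeasurable
  · filter_upwards [ae_restrict_mem measurableSet_uIoc] with t ht x hx
    exact hC (t, x) ⟨uIoc_subset_uIcc ht, Metric.ball_subset_closedBall hx⟩
  · exact intervalIntegrable_const
  · filter_upwards with t x _
    exact hasFDerivAt_partial hG t x

/-- Abstract adjoint-equation gradient theorem. -/
lemma adjoint_aux [ProperSpace E]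
    (F : E → E) (hF : ContDiff ℝ 1 F)
    (φ : ℝ → E → E) (h : ℝ → E → ℝ)
    (hφ0 : φ 0 = id)
    (hflow : ∀ (t : ℝ) ξ, HasDerivAt (fun u => φ u ξ) (F (φ t ξ)) t)
    (hφsmooth : ContDiff ℝ 1 (fun p : ℝ × E => φ p.1 p.2))
    (hhsmooth : ContDiff ℝ 1 (fun p : ℝ × E => h p.1 p.2))
    (ξ₀ : E) (a : ℝ → E →L[ℝ] ℝ)
    (hode : ∀ t ∈ Set.Ioo (0:ℝ) 1,
      HasDerivAt a
        (-(fderiv ℝ (h t) (φ t ξ₀)) - (a t).comp (fderiv ℝ F (φ t ξ₀))) t)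
    (hcont : ContinuousOn a (Set.Icc 0 1))
    (hterm : a 1 = 0) :
    fderiv ℝ (fun ζ => ∫ τ in (0:ℝ)..1, h τ (φ τ ζ)) ξ₀ = a 0 := by
  have hφpart : ∀ (t : ℝ) (x : E), HasFDerivAt (φ t)
      ((fderiv ℝ (fun p : ℝ × E => φ p.1 p.2) (t, x)).comp (ContinuousLinearMap.inr ℝ ℝ E)) x :=
    fun t x => hasFDerivAt_partial hφsmooth t x
  have hhpart : ∀ (t : ℝ) (x : E), HasFDerivAt (h t)
      ((fderiv ℝ (fun p : ℝ × E => h p.1 p.2) (t, x)).comp (ContinuousLinearMap.inr ℝ ℝ E)) x :=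
    fun t x => hasFDerivAt_partial hhsmooth t x
  set N : ℝ → E →L[ℝ] E := fun t => fderiv ℝ (φ t) ξ₀ with hNdef
  set g : ℝ → E →L[ℝ] ℝ := fun t => fderiv ℝ (h t) (φ t ξ₀) with hgdef
  have hφξ₀ : Continuous fun t => φ t ξ₀ :=
    hφsmooth.continuous.comp (continuous_id.prodMk continuous_const)
  have Ncont : Continuous N := by
    have hfun : N = fun t =>
        (fderiv ℝ (fun p : ℝ × E => φ p.1 p.2) (t, ξ₀)).comp (ContinuousLinearMap.inr ℝ ℝ E) :=
      funext fun t => (hφpart t ξ₀).fderiv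
    rw [hfun]
    exact (continuous_partial_fderiv hφsmooth).comp (continuous_id.prodMk continuous_const)
  have gcont : Continuous g := by
    have hfun : g = fun t =>
        (fderiv ℝ (fun p : ℝ × E => h p.1 p.2) (t, φ t ξ₀)).comp
          (ContinuousLinearMap.inr ℝ ℝ E) :=
      funext fun t => (hhpart t (φ t ξ₀)).fderiv
    rw [hfun]
    exact (continuous_partial_fderiv hhsmooth).comp (continuous_id.prodMk hφξ₀)
  -- Step A : derivative of the loss
  have hchain : ∀ τ : ℝ, HasFDerivAt (fun ζ => h τ (φ τ ζ)) ((g τ).comp (N τ)) ξ₀ := by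
    intro τ
    have h1 : HasFDerivAt (h τ) (g τ) (φ τ ξ₀) :=
      (hhpart τ (φ τ ξ₀)).differentiableAt.hasFDerivAt
    have h2 : HasFDerivAt (φ τ) (N τ) ξ₀ := (hφpart τ ξ₀).differentiableAt.hasFDerivAt
    exact h1.comp ξ₀ h2
  have hGA : ContDiff ℝ 1 (fun p : ℝ × E => h p.1 (φ p.1 p.2)) :=
    hhsmooth.comp (contDiff_fst.prodMk hφsmooth)
  have hA1 : HasFDerivAt (fun ζ => ∫ τ in (0:ℝ)..1, h τ (φ τ ζ))
      (∫ τ in (0:ℝ)..1, (g τ).comp (N τ)) ξ₀ := by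
    have := param_hasFDerivAt hGA 0 1 ξ₀
    have heq : ∀ τ : ℝ, (fderiv ℝ (fun p : ℝ × E => h p.1 (φ p.1 p.2)) (τ, ξ₀)).comp
        (ContinuousLinearMap.inr ℝ ℝ E) = (g τ).comp (N τ) :=
      fun τ => (hasFDerivAt_partial hGA τ ξ₀).unique (hchain τ)
    simpa only [heq] using this
  -- Step B : the variational equation
  have hGB : ContDiff ℝ 1 (fun p : ℝ × E => F (φ p.1 p.2)) := hF.comp hφsmooth
  have hFTC : ∀ (t : ℝ) (ξ : E), (∫ s in (0:ℝ)..t, F (φ s ξ)) = φ t ξ - ξ := by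
    intro t ξ
    have hcι : Continuous fun s => F (φ s ξ) :=
      hF.continuous.comp (hφsmooth.continuous.comp (continuous_id.prodMk continuous_const))
    have := intervalIntegral.integral_eq_sub_of_hasDerivAt
      (f := fun u => φ u ξ) (fun s _ => hflow s ξ) (hcι.intervalIntegrable 0 t)
    simpa [hφ0] using this
  set ψ : ℝ → E →L[ℝ] E := fun s => (fderiv ℝ F (φ s ξ₀)).comp (N s) with hψdef
  have ψcont : Continuous ψ :=
    ((hF.continuous_fderiv one_ne_zero).comp hφξ₀).clm_comp Ncont
  have hBder : ∀ s : ℝ, HasFDerivAt (fun ζ => F (φ s ζ)) (ψ s) ξ₀ := fun s =>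
    ((hF.differentiable one_ne_zero (φ s ξ₀)).hasFDerivAt).comp ξ₀
      (hφpart s ξ₀).differentiableAt.hasFDerivAt
  have hNeq : ∀ t : ℝ, N t = (∫ s in (0:ℝ)..t, ψ s) + ContinuousLinearMap.id ℝ E := by
    intro t
    have h1 := param_hasFDerivAt hGB 0 t ξ₀
    have heq : ∀ s : ℝ, (fderiv ℝ (fun p : ℝ × E => F (φ p.1 p.2)) (s, ξ₀)).comp
        (ContinuousLinearMap.inr ℝ ℝ E) = ψ s :=
      fun s => (hasFDerivAt_partial hGB s ξ₀).unique (hBder s)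
    simp only [heq] at h1
    have h2 : HasFDerivAt (fun ζ : E => φ t ζ - ζ) (N t - ContinuousLinearMap.id ℝ E) ξ₀ :=
      ((hφpart t ξ₀).differentiableAt.hasFDerivAt).sub (hasFDerivAt_id ξ₀)
    have h3 : (fun x : E => ∫ s in (0:ℝ)..t, F (φ s x)) = fun ζ => φ t ζ - ζ :=
      funext fun ζ => hFTC t ζ
    rw [h3] at h1
    rw [h1.unique h2]
    abel
  have hN' : ∀ t : ℝ, HasDerivAt N (ψ t) t := by
    intro t
    have hd : HasDerivAt (fun u => ∫ s in (0:ℝ)..u, ψ s) (ψ t) t :=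
      intervalIntegral.integral_hasDerivAt_right (ψcont.intervalIntegrable 0 t)
        (ψcont.stronglyMeasurableAtFilter _ _) ψcont.continuousAt
    have hfun : N = fun u => (∫ s in (0:ℝ)..u, ψ s) + ContinuousLinearMap.id ℝ E := funext hNeq
    rw [hfun]
    exact hd.add_const _
  -- Step C/D : the conserved quantity
  set χ : ℝ → E →L[ℝ] ℝ := fun s => (g s).comp (N s) with hχdef
  have χcont : Continuous χ := gcont.clm_comp Ncont
  have hInt' : ∀ t : ℝ, HasDerivAt (fun u => ∫ s in (0:ℝ)..u, χ s) (χ t) t := fun t =>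
    intervalIntegral.integral_hasDerivAt_right (χcont.intervalIntegrable 0 t)
      (χcont.stronglyMeasurableAtFilter _ _) χcont.continuousAt
  set A : ℝ → E →L[ℝ] ℝ := fun t => (a t).comp (N t) + ∫ s in (0:ℝ)..t, χ s with hAdef
  have hA' : ∀ t ∈ Set.Ioo (0:ℝ) 1, HasDerivAt A 0 t := by
    intro t ht
    have h1 := (hode t ht).clm_comp (hN' t)
    have h2 := h1.add (hInt' t)
    have hzero : ((-(g t) - (a t).comp (fderiv ℝ F (φ t ξ₀))).comp (N t)
        + (a t).comp (ψ t)) + χ t = 0 := by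
      simp only [hψdef, hχdef, ← ContinuousLinearMap.comp_assoc,
        ContinuousLinearMap.sub_comp, ContinuousLinearMap.neg_comp]
      abel
    rw [hzero] at h2
    exact h2
  have hIntCont : Continuous fun u => ∫ s in (0:ℝ)..u, χ s :=
    continuous_iff_continuousAt.2 fun t => (hInt' t).continuousAt
  have hAcont : ContinuousOn A (Set.Icc 0 1) :=
    (hcont.clm_comp Ncont.continuousOn).add hIntCont.continuousOn
  have hA10 : A 1 = A 0 := by
    ext v
    obtain ⟨c, hc, hceq⟩ := exists_hasDerivAt_eq_slope (fun t => A t v) (fun _ => 0) one_pos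
      (fun t ht => ((ContinuousLinearMap.apply ℝ ℝ v).continuous.comp_continuousOn
        hAcont) t ht)
      (fun x hx => by simpa using (hA' x hx).clm_apply (hasDerivAt_const x v))
    have : A 1 v - A 0 v = 0 := by
      field_simp at hceq
      linarith [hceq]
    linarith [this]
  have hN0 : N 0 = ContinuousLinearMap.id ℝ E := by
    have : fderiv ℝ (φ 0) ξ₀ = fderiv ℝ (id : E → E) ξ₀ := by rw [hφ0]
    simpa [fderiv_id] using this
  have hA0 : A 0 = a 0 := by
    simp [hAdef, hN0]
  have hA1v : A 1 = ∫ τ in (0:ℝ)..1, χ τ := by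
    simp [hAdef, hterm]
  rw [hA1.fderiv]
  have hAA : (∫ τ in (0:ℝ)..1, (g τ).comp (N τ)) = ∫ τ in (0:ℝ)..1, χ τ := rfl
  rw [hAA, ← hA1v, hA10, hA0]


end AdjointAux

/-- Inclusion of the middle (state) block `ℝ^d` into `S = ℝ × ℝ^d × ℝ^k`. -/
noncomputable def midIncl (d k : ℕ) :
    (Fin d → ℝ) →L[ℝ] (ℝ × (Fin d → ℝ) × (Fin k → ℝ)) :=
  (ContinuousLinearMap.inr ℝ ℝ ((Fin d → ℝ) × (Fin k → ℝ))).comp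
    (ContinuousLinearMap.inl ℝ (Fin d → ℝ) (Fin k → ℝ))

/-- Gradient via the adjoint equation for continuous observations:
for the loss `L(ξ) = ∫₀¹ h(τ)(φ(τ)(ξ)) dτ`, if `a` solves
`ȧ(t) = −g(t) − a₂(t)·J(t)` backward from `a(1) = 0`, where
`g(t) = h(t)'(φ(t)(ξ₀))` and `J(t) = f'(φ(t)(ξ₀))`, then `L'(ξ₀) = a(0)`. -/
theorem gradient_continuous_observations
    (d k : ℕ)
    (f : (ℝ × (Fin d → ℝ) × (Fin k → ℝ)) → (Fin d → ℝ)) (hf : ContDiff ℝ 1 f)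
    (φ : ℝ → (ℝ × (Fin d → ℝ) × (Fin k → ℝ)) → (ℝ × (Fin d → ℝ) × (Fin k → ℝ)))
    (h : ℝ → (ℝ × (Fin d → ℝ) × (Fin k → ℝ)) → ℝ)
    -- φ is the lifted flow of f
    (hφ0 : φ 0 = id)
    (hgroup : ∀ t s : ℝ, φ (t + s) = φ t ∘ φ s)
    (hflow : ∀ (t : ℝ) ξ, HasDerivAt (fun u => φ u ξ) (liftedF f (φ t ξ)) t)
    -- joint regularity, enough to differentiate the loss under the integral sign
    (hφsmooth : ContDiff ℝ 1 (fun p : ℝ × (ℝ × (Fin d → ℝ) × (Fin k → ℝ)) => φ p.1 p.2))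
    (hhsmooth : ContDiff ℝ 1 (fun p : ℝ × (ℝ × (Fin d → ℝ) × (Fin k → ℝ)) => h p.1 p.2))
    -- the base point and the adjoint variable
    (ξ₀ : ℝ × (Fin d → ℝ) × (Fin k → ℝ))
    (a : ℝ → ((ℝ × (Fin d → ℝ) × (Fin k → ℝ)) →L[ℝ] ℝ))
    -- a solves ȧ(t) = −g(t) − a₂(t)·J(t) on (0,1), backward from a(1) = 0
    (hode : ∀ t ∈ Set.Ioo (0:ℝ) 1,
      HasDerivAt a
        (-(fderiv ℝ (h t) (φ t ξ₀))
          - ((a t).comp (midIncl d k)).comp (fderiv ℝ f (φ t ξ₀))) t)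
    (hcont : ContinuousOn a (Set.Icc 0 1))
    (hterm : a 1 = 0) :
    fderiv ℝ (fun ζ => ∫ τ in (0:ℝ)..1, h τ (φ τ ζ)) ξ₀ = a 0 := by
  have hFc : ContDiff ℝ 1 (liftedF f) := by
    unfold liftedF
    exact contDiff_const.prodMk (hf.prodMk contDiff_const)
  have hDF : ∀ x, fderiv ℝ (liftedF f) x =
      ((0 : (ℝ × (Fin d → ℝ) × (Fin k → ℝ)) →L[ℝ] ℝ).prod
        ((fderiv ℝ f x).prod 0)) := by
    intro x
    have : HasFDerivAt (liftedF f)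
        ((0 : (ℝ × (Fin d → ℝ) × (Fin k → ℝ)) →L[ℝ] ℝ).prod ((fderiv ℝ f x).prod 0)) x := by
      unfold liftedF
      exact (hasFDerivAt_const (1:ℝ) x).prodMk
        (((hf.differentiable one_ne_zero x).hasFDerivAt).prodMk (hasFDerivAt_const _ x))
    exact this.fderiv
  have hkey : ∀ (t : ℝ) x, ((a t).comp (midIncl d k)).comp (fderiv ℝ f x)
      = (a t).comp (fderiv ℝ (liftedF f) x) := by
    intro t x
    rw [hDF x]
    ext u
    all_goals simp [midIncl, ContinuousLinearMap.comp_apply, ContinuousLinearMap.prod_apply,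
      ContinuousLinearMap.inl_apply, ContinuousLinearMap.inr_apply]
  apply adjoint_aux (liftedF f) hFc φ h hφ0 hflow hφsmooth hhsmooth ξ₀ a _ hcont hterm
  intro t ht
  have := hode t ht
  rwa [hkey t (φ t ξ₀)] at this
end

section
/- (Single observation strictly inside the interval.) Suppose σ = δ_{τ} for some fixed 0 < τ < 1 and the loss is L = h(τ)∘φ(τ). Let g(τ) = (h(τ)'∘φ(τ))(t₀,x₀,θ). Then L'(t₀,x₀,θ) = a(0), where a solves the backward homogeneous linear problem ȧ(t) = −a₂(t)·J(t) for 0 < t < τ with terminal condition a(τ) = g(τ), and J(t) = f'(t₀+t, x(t₀+t), θ). Equivalently: the solution of the adjoint equation on (τ,1] with a(1)=0 is identically zero, jumps by g(τ) at t = τ, then evolves by the homogeneous equation on (0,τ). -/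
open Set
open scoped Topology

section Aux

variable {d k : ℕ}

/-- norm bound for `midIncl`. -/
lemma midIncl_norm_le : ‖midIncl d k‖ ≤ 1 := by
  refine ContinuousLinearMap.opNorm_le_bound _ zero_le_one (fun v => ?_)
  simp only [midIncl, ContinuousLinearMap.comp_apply, ContinuousLinearMap.inr_apply,
    ContinuousLinearMap.inl_apply, one_mul]
  simp [Prod.norm_def]

/-- The derivative of `liftedF f`. -/
lemma hasFDerivAt_liftedF {f : (ℝ × (Fin d → ℝ) × (Fin k → ℝ)) → (Fin d → ℝ)}
    (hf : ContDiff ℝ 1 f) (ζ : ℝ × (Fin d → ℝ) × (Fin k → ℝ)) :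
    HasFDerivAt (liftedF f) ((midIncl d k).comp (fderiv ℝ f ζ)) ζ := by
  have h1 : HasFDerivAt (fun ξ => ((1:ℝ), f ξ, (0 : Fin k → ℝ)))
      (((0 : (ℝ × (Fin d → ℝ) × (Fin k → ℝ)) →L[ℝ] ℝ)).prod
        ((fderiv ℝ f ζ).prod 0)) ζ :=
    (hasFDerivAt_const _ _).prodMk
      (((hf.differentiable one_ne_zero ζ).hasFDerivAt).prodMk (hasFDerivAt_const _ _))
  have h2 : ((0 : (ℝ × (Fin d → ℝ) × (Fin k → ℝ)) →L[ℝ] ℝ)).prod ((fderiv ℝ f ζ).prod 0)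
      = (midIncl d k).comp (fderiv ℝ f ζ) := by
    refine ContinuousLinearMap.ext fun v => ?_
    simp [midIncl, Prod.ext_iff]
  exact h2 ▸ h1

end Aux

set_option maxHeartbeats 2000000 in
/-- Single observation strictly inside the interval: for `σ = δ_τ`,
`0 < τ < 1`, and loss `L = h(τ)∘φ(τ)`, one has `L'(ξ₀) = a(0)`, where `a` solves
the backward homogeneous problem `ȧ(t) = −a₂(t)·J(t)` on `(0,τ)` with terminal
condition `a(τ) = g(τ) = (h(τ)'∘φ(τ))(ξ₀)`.  Moreover the solution of the adjoint
equation on `(τ,1]` with `a(1) = 0` is identically zero. -/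
theorem gradient_single_observation_interior
    (d k : ℕ) (τ : ℝ) (hτ : τ ∈ Set.Ioo (0:ℝ) 1)
    (f : (ℝ × (Fin d → ℝ) × (Fin k → ℝ)) → (Fin d → ℝ)) (hf : ContDiff ℝ 1 f)
    (φ : ℝ → (ℝ × (Fin d → ℝ) × (Fin k → ℝ)) → (ℝ × (Fin d → ℝ) × (Fin k → ℝ)))
    (h : ℝ → (ℝ × (Fin d → ℝ) × (Fin k → ℝ)) → ℝ)
    -- φ is the lifted flow of f
    (hφ0 : φ 0 = id)
    (hgroup : ∀ t s : ℝ, φ (t + s) = φ t ∘ φ s)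
    (hflow : ∀ (t : ℝ) ξ, HasDerivAt (fun u => φ u ξ) (liftedF f (φ t ξ)) t)
    (hφsmooth : ContDiff ℝ 1 (fun p : ℝ × (ℝ × (Fin d → ℝ) × (Fin k → ℝ)) => φ p.1 p.2))
    (hh : ∀ t, ContDiff ℝ 1 (h t))
    -- the base point and the adjoint variable
    (ξ₀ : ℝ × (Fin d → ℝ) × (Fin k → ℝ))
    (a : ℝ → ((ℝ × (Fin d → ℝ) × (Fin k → ℝ)) →L[ℝ] ℝ))
    -- a solves the homogeneous equation ȧ(t) = −a₂(t)·J(t) on (0,τ) ...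
    (hode : ∀ t ∈ Set.Ioo (0:ℝ) τ,
      HasDerivAt a (-(((a t).comp (midIncl d k)).comp (fderiv ℝ f (φ t ξ₀)))) t)
    (hcont : ContinuousOn a (Set.Icc 0 τ))
    -- ... with terminal condition a(τ) = g(τ)
    (hterm : a τ = fderiv ℝ (h τ) (φ τ ξ₀)) :
    -- then L' = a(0), where L = h(τ)∘φ(τ)
    fderiv ℝ (fun ζ => h τ (φ τ ζ)) ξ₀ = a 0 ∧
    -- and any solution of the homogeneous adjoint equation on (τ,1) vanishing at 1
    -- is identically zero on [τ,1]
    (∀ b : ℝ → ((ℝ × (Fin d → ℝ) × (Fin k → ℝ)) →L[ℝ] ℝ),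
      (∀ t ∈ Set.Ioo τ (1:ℝ),
        HasDerivAt b (-(((b t).comp (midIncl d k)).comp (fderiv ℝ f (φ t ξ₀)))) t) →
      ContinuousOn b (Set.Icc τ 1) → b 1 = 0 →
      ∀ t ∈ Set.Icc τ (1:ℝ), b t = 0) := by
  obtain ⟨hτ0, hτ1⟩ := hτ
  -- basic differentiability facts
  have hΦd : Differentiable ℝ (fun p : ℝ × (ℝ × (Fin d → ℝ) × (Fin k → ℝ)) => φ p.1 p.2) := hφsmooth.differentiable one_ne_zero
  have hφtd : ∀ (t : ℝ), Differentiable ℝ (φ t) := by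
    intro t x
    have h1 : DifferentiableAt ℝ ((fun p : ℝ × (ℝ × (Fin d → ℝ) × (Fin k → ℝ)) => φ p.1 p.2)
        ∘ (fun y => (t, y))) x :=
      DifferentiableAt.comp x (hΦd (t, x)) ((differentiableAt_const t).prodMk differentiableAt_id)
    exact h1
  have hΦc : Continuous (fun p : ℝ × (ℝ × (Fin d → ℝ) × (Fin k → ℝ)) => φ p.1 p.2) := hφsmooth.continuous
  -- fderiv of φ t at x, expressed through the joint fderiv
  have hDx_eq : ∀ (t : ℝ) (x : (ℝ × (Fin d → ℝ) × (Fin k → ℝ))), fderiv ℝ (φ t) x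
      = (fderiv ℝ (fun p : ℝ × (ℝ × (Fin d → ℝ) × (Fin k → ℝ)) => φ p.1 p.2) (t, x)).comp (ContinuousLinearMap.inr ℝ ℝ (ℝ × (Fin d → ℝ) × (Fin k → ℝ))) := by
    intro t x
    have h1 : HasFDerivAt (fun y : (ℝ × (Fin d → ℝ) × (Fin k → ℝ)) => φ t y)
        ((fderiv ℝ (fun p : ℝ × (ℝ × (Fin d → ℝ) × (Fin k → ℝ)) => φ p.1 p.2) (t, x)).comp (ContinuousLinearMap.inr ℝ ℝ (ℝ × (Fin d → ℝ) × (Fin k → ℝ)))) x :=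
      ((hΦd (t, x)).hasFDerivAt).comp x (hasFDerivAt_prodMk_right t x)
    exact h1.fderiv
  have hDxcont : Continuous (fun p : ℝ × (ℝ × (Fin d → ℝ) × (Fin k → ℝ)) => fderiv ℝ (φ p.1) p.2) := by
    have : (fun p : ℝ × (ℝ × (Fin d → ℝ) × (Fin k → ℝ)) => fderiv ℝ (φ p.1) p.2)
        = fun p => (fderiv ℝ (fun q : ℝ × (ℝ × (Fin d → ℝ) × (Fin k → ℝ)) => φ q.1 q.2) p).comp (ContinuousLinearMap.inr ℝ ℝ (ℝ × (Fin d → ℝ) × (Fin k → ℝ))) := by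
      funext p; exact hDx_eq p.1 p.2
    rw [this]
    exact (hφsmooth.continuous_fderiv one_ne_zero).clm_comp continuous_const
  -- the integral identity for the flow
  have hliftc : Continuous (liftedF f) :=
    continuous_const.prodMk ((hf.continuous).prodMk continuous_const)
  have hint : ∀ (t : ℝ) (x : (ℝ × (Fin d → ℝ) × (Fin k → ℝ))), φ t x = x + ∫ u in (0:ℝ)..t, liftedF f (φ u x) := by
    intro t x
    have hc : Continuous fun u : ℝ => liftedF f (φ u x) :=
      hliftc.comp (hΦc.comp (continuous_id.prodMk continuous_const))
    have := intervalIntegral.integral_eq_sub_of_hasDerivAt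
      (f := fun u : ℝ => φ u x) (f' := fun u : ℝ => liftedF f (φ u x))
      (fun u _ => hflow u x) (hc.intervalIntegrable 0 t)
    rw [this]
    simp [hφ0]
  -- the derivative in x of the integrand
  set P : ℝ → (ℝ × (Fin d → ℝ) × (Fin k → ℝ)) → ((ℝ × (Fin d → ℝ) × (Fin k → ℝ)) →L[ℝ] (ℝ × (Fin d → ℝ) × (Fin k → ℝ))) :=
    fun u x => ((midIncl d k).comp (fderiv ℝ f (φ u x))).comp (fderiv ℝ (φ u) x) with hP_def
  have hP : ∀ (u : ℝ) (x : (ℝ × (Fin d → ℝ) × (Fin k → ℝ))), HasFDerivAt (fun y => liftedF f (φ u y)) (P u x) x := by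
    intro u x
    exact (hasFDerivAt_liftedF hf (φ u x)).comp x ((hφtd u x).hasFDerivAt)
  have hPcont : Continuous (fun p : ℝ × (ℝ × (Fin d → ℝ) × (Fin k → ℝ)) => P p.1 p.2) := by
    refine Continuous.clm_comp ?_ hDxcont
    exact continuous_const.clm_comp ((hf.continuous_fderiv one_ne_zero).comp hΦc)
  -- differentiation under the integral sign
  have hDint : ∀ t : ℝ, HasFDerivAt (fun x => ∫ u in (0:ℝ)..t, liftedF f (φ u x))
      (∫ u in (0:ℝ)..t, P u ξ₀) ξ₀ := by
    intro t
    obtain ⟨C, hC⟩ := ((isCompact_uIcc (a := (0:ℝ)) (b := t)).prod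
      (isCompact_closedBall ξ₀ 1)).exists_bound_of_continuousOn hPcont.continuousOn
    have hPx0c : Continuous fun u : ℝ => P u ξ₀ :=
      hPcont.comp (continuous_id.prodMk continuous_const)
    refine intervalIntegral.hasFDerivAt_integral_of_dominated_of_fderiv_le
      (F := fun x u => liftedF f (φ u x)) (F' := fun x u => P u x) (bound := fun _ => C)
      (Metric.ball_mem_nhds ξ₀ one_pos) ?_ ?_ ?_ ?_ ?_ ?_
    · filter_upwards with x
      exact ((hliftc.comp (hΦc.comp (continuous_id.prodMk continuous_const))).aestronglyMeasurable)
    · exact ((hliftc.comp (hΦc.comp (continuous_id.prodMk continuous_const))).intervalIntegrable 0 t)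
    · exact hPx0c.aestronglyMeasurable
    · refine MeasureTheory.ae_of_all _ (fun u hu x hx => ?_)
      exact hC (u, x) ⟨uIoc_subset_uIcc hu, Metric.ball_subset_closedBall hx⟩
    · exact intervalIntegrable_const
    · exact MeasureTheory.ae_of_all _ (fun u _ x _ => hP u x)
  -- the variational equation
  set D : ℝ → ((ℝ × (Fin d → ℝ) × (Fin k → ℝ)) →L[ℝ] (ℝ × (Fin d → ℝ) × (Fin k → ℝ))) := fun t => fderiv ℝ (φ t) ξ₀ with hD_def
  have hDval : ∀ t : ℝ, D t = ContinuousLinearMap.id ℝ (ℝ × (Fin d → ℝ) × (Fin k → ℝ)) + ∫ u in (0:ℝ)..t, P u ξ₀ := by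
    intro t
    have h1 : HasFDerivAt (fun x : (ℝ × (Fin d → ℝ) × (Fin k → ℝ)) => x + ∫ u in (0:ℝ)..t, liftedF f (φ u x))
        (ContinuousLinearMap.id ℝ (ℝ × (Fin d → ℝ) × (Fin k → ℝ)) + ∫ u in (0:ℝ)..t, P u ξ₀) ξ₀ :=
      (hasFDerivAt_id ξ₀).add (hDint t)
    have heq : (fun x : (ℝ × (Fin d → ℝ) × (Fin k → ℝ)) => x + ∫ u in (0:ℝ)..t, liftedF f (φ u x)) = φ t :=
      funext fun x => (hint t x).symm
    rw [heq] at h1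
    exact h1.fderiv
  have hDcont : Continuous D := hDxcont.comp (continuous_id.prodMk continuous_const)
  have hD' : ∀ t : ℝ, HasDerivAt D (P t ξ₀) t := by
    intro t
    have hPx0c : Continuous fun u : ℝ => P u ξ₀ :=
      hPcont.comp (continuous_id.prodMk continuous_const)
    have h1 : HasDerivAt (fun s => ∫ u in (0:ℝ)..s, P u ξ₀) (P t ξ₀) t :=
      intervalIntegral.integral_hasDerivAt_right (hPx0c.intervalIntegrable 0 t)
        (hPx0c.stronglyMeasurableAtFilter _ _) hPx0c.continuousAt
    have h2 := h1.const_add (ContinuousLinearMap.id ℝ (ℝ × (Fin d → ℝ) × (Fin k → ℝ)))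
    have heq : D = fun s => ContinuousLinearMap.id ℝ (ℝ × (Fin d → ℝ) × (Fin k → ℝ)) + ∫ u in (0:ℝ)..s, P u ξ₀ :=
      funext hDval
    rw [heq]
    exact h2
  -- A t = a t ∘ D t is constant on [0, τ]
  set A : ℝ → ((ℝ × (Fin d → ℝ) × (Fin k → ℝ)) →L[ℝ] ℝ) := fun t => (a t).comp (D t) with hA_def
  have hA' : ∀ t ∈ Ioo (0:ℝ) τ, HasDerivAt A 0 t := by
    intro t ht
    have h3 := (hode t ht).clm_comp (hD' t)
    convert h3 using 1
    rw [hP_def]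
    simp only
    rw [ContinuousLinearMap.neg_comp, ← ContinuousLinearMap.comp_assoc,
      ← ContinuousLinearMap.comp_assoc]
    exact (neg_add_cancel _).symm
  have hAcont : ContinuousOn A (Icc 0 τ) := hcont.clm_comp hDcont.continuousOn
  have hAconst : ∀ ε ∈ Ioc (0:ℝ) τ, A τ = A ε := by
    intro ε hε
    have := constant_of_has_deriv_right_zero (f := A) (a := ε) (b := τ)
      (hAcont.mono (Icc_subset_Icc hε.1.le le_rfl))
      (fun x hx => ((hA' x ⟨lt_of_lt_of_le hε.1 hx.1, hx.2⟩).hasDerivWithinAt))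
    exact this τ (right_mem_Icc.2 hε.2)
  have hA0 : A 0 = A τ := by
    have hne : (𝓝[Ioc (0:ℝ) τ] 0).NeBot := by
      refine mem_closure_iff_nhdsWithin_neBot.1 ?_
      rw [closure_Ioc hτ0.ne]
      exact left_mem_Icc.2 hτ0.le
    have h1 : Filter.Tendsto A (𝓝[Ioc (0:ℝ) τ] 0) (𝓝 (A 0)) := by
      have := (hAcont 0 (left_mem_Icc.2 hτ0.le)).tendsto
      exact this.mono_left (nhdsWithin_mono 0 Ioc_subset_Icc_self)
    have h2 : Filter.Tendsto A (𝓝[Ioc (0:ℝ) τ] 0) (𝓝 (A τ)) := by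
      refine Filter.Tendsto.congr' ?_ tendsto_const_nhds
      exact Filter.eventually_of_mem self_mem_nhdsWithin (fun x hx => hAconst x hx)
    exact tendsto_nhds_unique h1 h2
  constructor
  · -- part 1
    have hchain : fderiv ℝ (fun ζ => h τ (φ τ ζ)) ξ₀ = (fderiv ℝ (h τ) (φ τ ξ₀)).comp (D τ) := by
      exact fderiv_comp ξ₀ ((hh τ).differentiable one_ne_zero _) (hφtd τ ξ₀)
    have hD0 : D 0 = ContinuousLinearMap.id ℝ (ℝ × (Fin d → ℝ) × (Fin k → ℝ)) := by
      rw [hD_def]; simp only [hφ0]; exact fderiv_id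
    calc fderiv ℝ (fun ζ => h τ (φ τ ζ)) ξ₀
        = (a τ).comp (D τ) := by rw [hchain, hterm]
      _ = A τ := rfl
      _ = A 0 := hA0.symm
      _ = (a 0).comp (D 0) := rfl
      _ = a 0 := by rw [hD0, ContinuousLinearMap.comp_id]
  · -- part 2
    intro b hb hbcont hb1
    -- a bound for the operator of the linear ODE on [τ, 1]
    obtain ⟨C, hC⟩ := (isCompact_Icc (a := τ) (b := (1:ℝ))).exists_bound_of_continuousOn
      (f := fun u : ℝ => (midIncl d k).comp (fderiv ℝ f (φ u ξ₀)))
      (Continuous.continuousOn (continuous_const.clm_comp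
        ((hf.continuous_fderiv one_ne_zero).comp (hΦc.comp (continuous_id.prodMk continuous_const)))))
    set Kc : ℝ := max C 0 with hKc_def
    have hKc0 : 0 ≤ Kc := le_max_right _ _
    have hCK : ∀ u ∈ Icc τ (1:ℝ), ‖(midIncl d k).comp (fderiv ℝ f (φ u ξ₀))‖ ≤ Kc :=
      fun u hu => (hC u hu).trans (le_max_left _ _)
    -- time reversal
    set σ : ℝ → ℝ := fun u => 1 + τ - u with hσ_def
    set B : ℝ → ((ℝ × (Fin d → ℝ) × (Fin k → ℝ)) →L[ℝ] ℝ) := fun u => b (σ u) with hB_def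
    have hσmaps : MapsTo σ (Icc τ 1) (Icc τ 1) := by
      intro u hu
      constructor <;> simp only [hσ_def] <;> [linarith [hu.2]; linarith [hu.1]]
    have hBcont : ContinuousOn B (Icc τ 1) :=
      hbcont.comp ((continuous_const.sub continuous_id).continuousOn) hσmaps
    set Bd : ℝ → ((ℝ × (Fin d → ℝ) × (Fin k → ℝ)) →L[ℝ] ℝ) :=
      fun u => (b (σ u)).comp ((midIncl d k).comp (fderiv ℝ f (φ (σ u) ξ₀))) with hBd_def
    have hB' : ∀ u ∈ Ioo τ (1:ℝ), HasDerivAt B (Bd u) u := by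
      intro u hu
      have hσu : σ u ∈ Ioo τ (1:ℝ) := by
        constructor <;> simp only [hσ_def] <;> [linarith [hu.2]; linarith [hu.1]]
      have hσ' : HasDerivAt σ (-1) u := by
        simpa using ((hasDerivAt_id u).const_sub (1 + τ))
      have := (hb (σ u) hσu).scomp u hσ'
      refine this.congr_deriv ?_
      rw [hBd_def]
      simp only
      rw [← ContinuousLinearMap.comp_assoc]
      module
    have hnorm : ∀ u ∈ Ico τ (1:ℝ), u ∈ Ioo τ (1:ℝ) → ‖Bd u‖ ≤ Kc * ‖B u‖ + 0 := by
      intro u _ hu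
      rw [add_zero]
      have hσu : σ u ∈ Icc τ (1:ℝ) := by
        constructor <;> simp only [hσ_def] <;> [linarith [hu.2]; linarith [hu.1]]
      calc ‖Bd u‖ ≤ ‖b (σ u)‖ * ‖(midIncl d k).comp (fderiv ℝ f (φ (σ u) ξ₀))‖ :=
            ContinuousLinearMap.opNorm_comp_le _ _
        _ ≤ ‖b (σ u)‖ * Kc := by
            exact mul_le_mul_of_nonneg_left (hCK _ hσu) (norm_nonneg _)
        _ = Kc * ‖B u‖ := by rw [mul_comm]
    -- Gronwall estimate starting from s₀ ∈ (τ, 1]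
    have hgron : ∀ s₀ ∈ Ioc τ (1:ℝ), ∀ x ∈ Icc s₀ 1,
        ‖B x‖ ≤ ‖B s₀‖ * Real.exp (Kc * (x - s₀)) := by
      intro s₀ hs₀ x hx
      have hmono : Icc s₀ 1 ⊆ Icc τ 1 := Icc_subset_Icc hs₀.1.le le_rfl
      have := norm_le_gronwallBound_of_norm_deriv_right_le (f := B) (f' := Bd)
        (δ := ‖B s₀‖) (K := Kc) (ε := 0) (a := s₀) (b := 1)
        (hBcont.mono hmono)
        (fun y hy => (hB' y ⟨lt_of_lt_of_le hs₀.1 hy.1, hy.2⟩).hasDerivWithinAt)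
        le_rfl
        (fun y hy => hnorm y (Ico_subset_Ico_left hs₀.1.le hy)
          ⟨lt_of_lt_of_le hs₀.1 hy.1, hy.2⟩)
        x hx
      rwa [gronwallBound_ε0] at this
    -- conclude B = 0 on [τ, 1]
    have hBτ : B τ = 0 := by
      simp only [hB_def, hσ_def]
      rw [show (1 : ℝ) + τ - τ = 1 by ring]
      exact hb1
    have hBzero : ∀ u ∈ Icc τ (1:ℝ), B u = 0 := by
      intro u hu
      rcases eq_or_lt_of_le hu.1 with heq | hlt
      · rw [← heq]; exact hBτ
      · have hne : (𝓝[Ioc τ u] τ).NeBot := by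
          refine mem_closure_iff_nhdsWithin_neBot.1 ?_
          rw [closure_Ioc hlt.ne]
          exact left_mem_Icc.2 hlt.le
        have hub : Ioc τ u ⊆ Icc τ 1 := fun y hy => ⟨hy.1.le, hy.2.trans hu.2⟩
        have hcτ : ContinuousWithinAt B (Ioc τ u) τ :=
          (hBcont τ ⟨le_rfl, hτ1.le⟩).mono hub
        have h1 : Filter.Tendsto (fun s₀ => ‖B s₀‖ * Real.exp (Kc * (u - s₀)))
            (𝓝[Ioc τ u] τ) (𝓝 (‖B τ‖ * Real.exp (Kc * (u - τ)))) := by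
          refine Filter.Tendsto.mul hcτ.norm ?_
          exact ((Real.continuous_exp.comp
            (continuous_const.mul (continuous_const.sub continuous_id))).continuousWithinAt)
        have hBu : ‖B u‖ ≤ ‖B τ‖ * Real.exp (Kc * (u - τ)) := by
          refine ge_of_tendsto h1 ?_
          exact Filter.eventually_of_mem self_mem_nhdsWithin (fun s₀ hs₀ =>
            hgron s₀ ⟨hs₀.1, hs₀.2.trans hu.2⟩ u ⟨hs₀.2, hu.2⟩)
        rw [hBτ, norm_zero, zero_mul] at hBu
        exact norm_le_zero_iff.1 hBu
    intro t ht
    have h1 : 1 + τ - t ∈ Icc τ (1:ℝ) := ⟨by linarith [ht.2], by linarith [ht.1]⟩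
    have := hBzero (1 + τ - t) h1
    simp only [hB_def, hσ_def] at this
    rwa [show (1:ℝ) + τ - (1 + τ - t) = t by ring] at this
end
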